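/- Let η₁, ..., ηₙ be vectors in a real inner product space with ⟨ηᵢ, ηⱼ⟩ = κ for i ≠ j (κ ≠ 0), ‖ηᵢ‖² ≠ κ for all i, and Σ_{i=1}^n ηᵢ/(‖ηᵢ‖² - κ) = 0. Then for each i, ηᵢ = Σ_{j≠i} (-κ/(‖ηⱼ‖² - κ)) (ηᵢ - ηⱼ). -/

import Mathlib

open RealInnerProductSpace

/-- Under the same hypotheses, ηᵢ = Σ_{j ≠ i} (-κ/(‖ηⱼ‖² - κ)) (ηᵢ - ηⱼ). -/
theorem stmt6 {E : Type*} [NormedAddCommGroup E] [InnerProductSpace ℝ E]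
    {n : ℕ} (η : Fin n → E) (κ : ℝ) (hκ : κ ≠ 0)
    (hinner : ∀ i j, i ≠ j → ⟪η i, η j⟫ = κ)
    (hnorm : ∀ i, ‖η i‖ ^ 2 ≠ κ)
    (hsum : ∑ i, (‖η i‖ ^ 2 - κ)⁻¹ • η i = 0) :
    ∀ i, η i = ∑ j ∈ Finset.univ.erase i,
      (-κ / (‖η j‖ ^ 2 - κ)) • (η i - η j) := by
  intro i
  set c : Fin n → ℝ := fun j => (‖η j‖ ^ 2 - κ)⁻¹ with hc
  have hci : c i * (‖η i‖ ^ 2 - κ) = 1 :=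
    inv_mul_cancel₀ (sub_ne_zero.mpr (hnorm i))
  -- scalar identity
  have h1 : ∑ j, c j * ⟪η i, η j⟫ = 0 := by
    have h := congrArg (fun v => (⟪η i, v⟫ : ℝ)) hsum
    simpa [inner_sum, real_inner_smul_right] using h
  have h2 : ∑ j ∈ Finset.univ.erase i, c j * κ + c i * ‖η i‖ ^ 2 = 0 := by
    rw [← h1, ← Finset.sum_erase_add _ _ (Finset.mem_univ i)]
    congr 1
    · exact Finset.sum_congr rfl fun j hj => by
        rw [hinner i j (Ne.symm (Finset.ne_of_mem_erase hj))]
    · rw [real_inner_self_eq_norm_sq]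
  have hsplit : ∑ j ∈ Finset.univ.erase i, c j + c i = ∑ j, c j :=
    Finset.sum_erase_add _ _ (Finset.mem_univ i)
  have hmulsum : ∑ j ∈ Finset.univ.erase i, c j * κ
      = (∑ j ∈ Finset.univ.erase i, c j) * κ := by
    rw [Finset.sum_mul]
  have hS : κ * ∑ j, c j = -1 := by
    have e1 : c i * ‖η i‖ ^ 2 = 1 + c i * κ := by nlinarith [hci]
    rw [hmulsum] at h2
    linear_combination h2 - e1 - κ * hsplit
  -- vector identity
  have hv : ∑ j ∈ Finset.univ.erase i, c j • η j = -(c i • η i) := by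
    have h := Finset.sum_erase_add Finset.univ (fun j => c j • η j)
      (Finset.mem_univ i)
    rw [hsum] at h
    exact eq_neg_of_add_eq_zero_left h
  have hrw : ∑ j ∈ Finset.univ.erase i, (-κ / (‖η j‖ ^ 2 - κ)) • (η i - η j)
      = (∑ j ∈ Finset.univ.erase i, (-κ * c j)) • η i
        + κ • ∑ j ∈ Finset.univ.erase i, c j • η j := by
    rw [Finset.smul_sum, Finset.sum_smul, ← Finset.sum_add_distrib]
    refine Finset.sum_congr rfl fun j hj => ?_
    rw [div_eq_mul_inv]
    show (-κ * c j) • (η i - η j) = (-κ * c j) • η i + κ • c j • η j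
    module
  have hE : ∑ j ∈ Finset.univ.erase i, (-κ * c j) = 1 + κ * c i := by
    have : ∑ j ∈ Finset.univ.erase i, (-κ * c j)
        = -κ * ∑ j ∈ Finset.univ.erase i, c j := by rw [Finset.mul_sum]
    rw [this, show (∑ j ∈ Finset.univ.erase i, c j) = (∑ j, c j) - c i from by
      linarith [hsplit]]
    linear_combination (-1 : ℝ) * hS
  rw [hrw, hE, hv]
  module
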